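/- Let X be a compact Hausdorff metric space (or any compact space in which countable sets are nowhere dense), H = ℓ²(X) with orthonormal basis (e_x)_{x∈X}, M = C(X, H) the module of continuous H-valued functions (a Hilbert C(X)-module with pointwise inner product), and N = {m ∈ M : ⟨e_x, m(x)⟩ = 0 for all x ∈ X}. If X has no isolated points and every countable subset of X is nowhere dense, then N is an essential submodule of M, even though L_x = e_x^⊥ ≠ H for every x ∈ X. -/

import Mathlib

open scoped ENNReal
open Filter Topology

set_option maxHeartbeats 800000
set_option synthInstance.maxHeartbeats 400000

/-- In `ℓ²`, the set of coordinates with norm at least `ε > 0` is finite. -/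
lemma lp_finite_large {X : Type*} (f : lp (fun _ : X => ℂ) 2) {ε : ℝ} (hε : 0 < ε) :
    {y : X | ε ≤ ‖f y‖}.Finite := by
  have hs : Summable fun i => ‖f i‖ ^ (2 : ℝ≥0∞).toReal :=
    (lp.memℓp f).summable (by norm_num)
  have h2 : Tendsto (fun i => ‖f i‖ ^ (2 : ℝ≥0∞).toReal) Filter.cofinite (nhds 0) :=
    hs.tendsto_cofinite_zero
  have hev := h2.eventually (gt_mem_nhds (Real.rpow_pos_of_pos hε (2 : ℝ≥0∞).toReal))
  rw [Filter.eventually_cofinite] at hev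
  refine hev.subset fun y hy => ?_
  simp only [Set.mem_setOf_eq, not_lt]
  exact Real.rpow_le_rpow hε.le hy (by norm_num)

/-- The "diagonal" set where a continuous `ℓ²`-valued map has large diagonal coordinate
is finite, by compactness. -/
lemma diag_finite {X : Type*} [TopologicalSpace X] [CompactSpace X]
    (m : C(X, lp (fun _ : X => ℂ) 2)) {ε : ℝ} (hε : 0 < ε) :
    {x : X | ε ≤ ‖(m x : ∀ _ : X, ℂ) x‖}.Finite := by
  set δ := ε / 3 with hδ
  have hδpos : 0 < δ := by positivity
  set U : X → Set X := fun c => {y | ‖m y - m c‖ < δ} with hU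
  have hUopen : ∀ c, IsOpen (U c) := by
    intro c
    have : Continuous fun y => ‖m y - m c‖ := (m.continuous.sub continuous_const).norm
    exact isOpen_lt this continuous_const
  have hcover : (Set.univ : Set X) ⊆ ⋃ c, U c := by
    intro y _
    exact Set.mem_iUnion.2 ⟨y, by simp [hU, hδpos]⟩
  obtain ⟨t, ht⟩ := isCompact_univ.elim_finite_subcover U hUopen hcover
  have hfin : (⋃ c ∈ t, {z : X | 2 * δ ≤ ‖(m c : ∀ _ : X, ℂ) z‖}).Finite :=
    t.finite_toSet.biUnion fun c _ => lp_finite_large (m c) (by positivity)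
  refine hfin.subset fun y hy => ?_
  have hyU : y ∈ ⋃ c ∈ t, U c := ht (Set.mem_univ y)
  obtain ⟨c, hct, hyc⟩ := Set.mem_iUnion₂.1 hyU
  refine Set.mem_iUnion₂.2 ⟨c, hct, ?_⟩
  have hcoord : ‖(m y : ∀ _ : X, ℂ) y - (m c : ∀ _ : X, ℂ) y‖ ≤ ‖m y - m c‖ := by
    have := lp.norm_apply_le_norm (by norm_num : (2 : ℝ≥0∞) ≠ 0) (m y - m c) y
    simpa using this
  have h1 : ‖(m y : ∀ _ : X, ℂ) y‖ - ‖(m c : ∀ _ : X, ℂ) y‖ ≤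
      ‖(m y : ∀ _ : X, ℂ) y - (m c : ∀ _ : X, ℂ) y‖ := norm_sub_norm_le _ _
  have hym : ε ≤ ‖(m y : ∀ _ : X, ℂ) y‖ := hy
  have hlt : ‖m y - m c‖ < δ := by
    have := hyc
    simpa [hU] using this
  simp only [Set.mem_setOf_eq]
  linarith

/-- Let `X` be a compact Hausdorff space in which every countable set
is nowhere dense (e.g. a compact metric space without isolated points), `H = ℓ²(X)` with
its standard orthonormal basis `(e x)_{x ∈ X}`, `M = C(X, H)` the Hilbert `C(X)`-module
of continuous `H`-valued functions, and `N = {m : ⟪e x, m x⟫ = 0 ∀ x}` the closed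
submodule of sections valued in `L x = (e x)ᗮ`. If `X` has no isolated points and every
countable subset of `X` is nowhere dense, then `N` is an essential submodule of `M` —
for every nonzero `m ∈ C(X, H)` there is `a ∈ C(X, ℂ)` with `a • m ∈ N` and `a • m ≠ 0` —
even though `L x = (e x)ᗮ ≠ H` for every `x`. -/
theorem essential_in_nonseparable_field {X : Type*} [TopologicalSpace X] [CompactSpace X]
    [T2Space X] [DecidableEq X]
    (hiso : ∀ x : X, ¬ IsOpen ({x} : Set X))
    (hctble : ∀ s : Set X, s.Countable → IsNowhereDense s) :
    letI H := lp (fun _ : X => ℂ) 2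
    letI e : X → H := fun x => lp.single 2 x 1
    (∀ x : X, ∃ v : H, (inner ℂ (e x) v : ℂ) ≠ 0) ∧
    ∀ m : C(X, H), m ≠ 0 →
      ∃ a : C(X, ℂ), (∀ x : X, (inner ℂ (e x) (a x • m x) : ℂ) = 0) ∧
        (fun x : X => a x • m x) ≠ 0 := by
  constructor
  · intro x
    refine ⟨lp.single 2 x 1, ?_⟩
    rw [lp.inner_single_left]
    simp [lp.single_apply, RCLike.inner_apply]
  · intro m hm
    -- the "bad" set Y where the diagonal coordinate is nonzero
    set Y : Set X := {x | (m x : ∀ _ : X, ℂ) x ≠ 0} with hY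
    have hYc : Y.Countable := by
      have hsub : Y ⊆ ⋃ n : ℕ, {x : X | 1 / (n + 1 : ℝ) ≤ ‖(m x : ∀ _ : X, ℂ) x‖} := by
        intro x hx
        have hpos : 0 < ‖(m x : ∀ _ : X, ℂ) x‖ := norm_pos_iff.2 hx
        obtain ⟨n, hn⟩ := exists_nat_one_div_lt hpos
        exact Set.mem_iUnion.2 ⟨n, le_of_lt hn⟩
      exact Set.Countable.mono hsub
        (Set.countable_iUnion fun n => (diag_finite m (by positivity)).countable)
    -- nowhere dense
    have hnd : interior (closure Y) = ∅ := hctble Y hYc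
    -- get a point where m is nonzero, away from closure Y
    have hV : IsOpen {x : X | m x ≠ 0} :=
      isOpen_compl_singleton.preimage m.continuous
    have hVne : {x : X | m x ≠ 0}.Nonempty := by
      by_contra h
      rw [Set.not_nonempty_iff_eq_empty] at h
      refine hm (ContinuousMap.ext fun x => ?_)
      have hx : m x = 0 := not_not.1 fun hx => Set.eq_empty_iff_forall_notMem.1 h x hx
      simpa using hx
    have hnotsub : ¬ {x : X | m x ≠ 0} ⊆ closure Y := by
      intro hsub
      have : {x : X | m x ≠ 0} ⊆ interior (closure Y) := interior_maximal hsub hV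
      rw [hnd] at this
      exact hVne.not_subset_empty this
    obtain ⟨x₁, hx₁V, hx₁Y⟩ := Set.not_subset.1 hnotsub
    -- Urysohn function
    obtain ⟨f, hf0, hf1, -⟩ := exists_continuous_zero_one_of_isClosed
      isClosed_closure (isClosed_singleton (x := x₁))
      (Set.disjoint_singleton_right.2 hx₁Y)
    refine ⟨⟨fun x => (f x : ℂ), Complex.continuous_ofReal.comp f.continuous⟩, ?_, ?_⟩
    · intro x
      rw [inner_smul_right, lp.inner_single_left]
      by_cases hx : x ∈ Y
      · have : f x = 0 := hf0 (subset_closure hx)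
        simp [this]
      · have : (m x : ∀ _ : X, ℂ) x = 0 := not_not.1 hx
        simp [this, RCLike.inner_apply]
    · intro h
      have hx₁ := congrFun h x₁
      have hfx₁ : f x₁ = 1 := hf1 rfl
      simp only [ContinuousMap.coe_mk, hfx₁, Complex.ofReal_one, one_smul,
        Pi.zero_apply] at hx₁
      exact hx₁V hx₁
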